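/- Let (Ω, 𝒜, μ) be a probability space with a filtration ℱ indexed by ℕ, let Z be a finite nonempty type, and let Y : Ω → Z be a measurable random variable. Define the posterior process π_t(z) = μ[ 1_{Y = z} ∣ ℱ t ] and the Bayes risk process V_t = 1 − ⨆ z, π_t(z). Then V is a supermartingale with respect to ℱ and μ: each V_t is integrable and ℱ_t-measurable (adapted), and for all s ≤ t, μ[ V_t ∣ ℱ s ] ≤ V_s holds μ-almost everywhere. -/

import Mathlib

open MeasureTheory

private lemma submartingale_finset_sup' {Ω : Type*} {𝒜 : MeasurableSpace Ω}
    {μ : Measure Ω} {ℱ : Filtration ℕ 𝒜} {Z : Type*}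
    (f : Z → ℕ → Ω → ℝ) (hf : ∀ z, Submartingale (f z) ℱ μ)
    (s : Finset Z) (hs : s.Nonempty) :
    Submartingale (fun t ω => s.sup' hs (fun z => f z t ω)) ℱ μ := by
  induction hs using Finset.Nonempty.cons_induction with
  | singleton z => simpa using hf z
  | cons z s hzs hs ih =>
      have := (hf z).sup ih
      have heq : (f z ⊔ fun t ω => s.sup' hs fun z => f z t ω) =
          fun t ω => (Finset.cons z s hzs).sup' (Finset.cons_nonempty hzs) (fun z => f z t ω) := by
        funext t ω
        exact (Finset.sup'_cons (H := hs) (f := fun z => f z t ω)).symm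
      rw [heq] at this
      exact this

/-- The Bayes risk process `V t = 1 - ⨆ z, π t z`, where
`π t z = μ[1_{Y = z} | ℱ t]` is the posterior process of a measurable random
variable `Y` into a finite nonempty type, is a supermartingale (adapted,
integrable, and satisfying `μ[V t | ℱ s] ≤ᵐ[μ] V s` for `s ≤ t`). -/
theorem bayes_risk_process_supermartingale
    {Ω : Type*} {𝒜 : MeasurableSpace Ω} (μ : Measure Ω) [IsProbabilityMeasure μ]
    (ℱ : Filtration ℕ 𝒜)
    (Z : Type*) [Fintype Z] [Nonempty Z] [MeasurableSpace Z]
    [MeasurableSingletonClass Z]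
    (Y : Ω → Z) (hY : Measurable Y) :
    Supermartingale
      (fun (t : ℕ) (ω : Ω) =>
        1 - ⨆ z, (μ[Set.indicator {ω' | Y ω' = z} (fun _ => (1 : ℝ))|ℱ t]) ω)
      ℱ μ := by
  have hmart : ∀ z : Z, Martingale
      (fun t => μ[Set.indicator {ω' | Y ω' = z} (fun _ => (1 : ℝ))|ℱ t]) ℱ μ := by
    intro z
    exact martingale_condExp _ ℱ μ
  have hsub : Submartingale
      (fun t ω => ⨆ z, (μ[Set.indicator {ω' | Y ω' = z} (fun _ => (1 : ℝ))|ℱ t]) ω) ℱ μ := by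
    have := submartingale_finset_sup'
      (fun z t => μ[Set.indicator {ω' | Y ω' = z} (fun _ => (1 : ℝ))|ℱ t])
      (fun z => (hmart z).submartingale) Finset.univ Finset.univ_nonempty
    convert this using 3 with t ω
    exact (Finset.sup'_univ_eq_ciSup _).symm
  have hone : Supermartingale (fun (_ : ℕ) (_ : Ω) => (1 : ℝ)) ℱ μ :=
    (martingale_const ℱ μ (1 : ℝ)).supermartingale
  exact hone.sub_submartingale hsub
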